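/- Under invariant P1, the history of a recycled object decomposes into consecutive non-interleaving rounds: grouping each modifier with timestamp t and the observers it serves yields sub-histories r_{t1}, …, r_{tm} (timestamps increasing) whose concatenation equals the linearization, i.e., any operation of round t entirely precedes any operation of round t' > t in the linearization. -/
import Mathlib


/-- Round decomposition of a recycled object's history: grouping each modifier
of timestamp t with the observers it serves, operations of round t entirely
precede operations of round t' > t in the linearization (which orders each
operation by its atomic access `time` to the decision register). `assoc a` is
the associated modifier of a (itself, for a modifier). -/
theorem stmt13 {Op : Type} (isMod : Op → Prop) (time : Op → ℕ) (ts : Op → ℕ)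
    (assoc : Op → Op)
    (hassocMod : ∀ a, isMod (assoc a))
    (hself : ∀ m, isMod m → assoc m = m)
    -- atomic accesses occur at distinct times
    (htimeInj : ∀ a b, time a = time b → a = b)
    -- modifiers of smaller timestamp write earlier (previous claim)
    (hmodOrder : ∀ m m', isMod m → isMod m' → ts m < ts m' → time m < time m')
    -- an observer reads after its associated modifier's write and before any
    -- later modifier's write (it reads the latest write)
    (hobs : ∀ a, ¬ isMod a → time (assoc a) < time a ∧
      ∀ m, isMod m → time m < time a → time m ≤ time (assoc a)) :
    ∀ a b, ts (assoc a) < ts (assoc b) → time a < time b := by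
  intro a b hts
  have hma := hassocMod a
  have hmb := hassocMod b
  have hmm : time (assoc a) < time (assoc b) := hmodOrder _ _ hma hmb hts
  -- first: time a < time (assoc b)
  have ha : time a ≤ time (assoc b) := by
    by_cases hA : isMod a
    · rw [hself a hA] at hmm; exact le_of_lt hmm
    · obtain ⟨h1, h2⟩ := hobs a hA
      by_contra h
      push_neg at h
      exact absurd (h2 _ hmb h) (not_le.mpr hmm)
  have ha' : time a < time (assoc b) := by
    rcases lt_or_eq_of_le ha with h | h
    · exact h
    · by_cases hA : isMod a
      · rw [hself a hA] at hmm; omega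
      · exact absurd (hmb) (by rw [← htimeInj a (assoc b) h]; exact hA)
  by_cases hB : isMod b
  · rwa [hself b hB] at ha'
  · exact lt_trans ha' (hobs b hB).1
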